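/- Let u : ℝ × ℝ → ℝ ∪ {−∞} be concave and real-valued on an open neighborhood of (0,0), and suppose that the function x ↦ u(0, x) is differentiable at 0 with derivative y_B > 0. Then the one-sided limits D⁺ := lim_{ε↓0} (u(ε,0) − u(0,0))/ε and D⁻ := lim_{ε↑0} (u(ε,0) − u(0,0))/ε exist in ℝ with D⁺ ≤ D⁻, and the set P := { p ∈ ℝ : u(ε, −ε·p) ≤ u(0,0) for all ε ∈ ℝ } is exactly the closed interval [D⁺ / y_B, D⁻ / y_B]. -/

import Mathlib

open Filter

/-- Concavity for functions into `EReal` (`ℝ ∪ {−∞}`, never taking the value `⊤`),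
with the extended-real conventions `0 · (−∞) = 0`. -/
def ConcaveE {E : Type*} [AddCommGroup E] [Module ℝ E] (u : E → EReal) : Prop :=
  ∀ a b : E, ∀ t : ℝ, 0 ≤ t → t ≤ 1 →
    (t : EReal) * u a + ((1 - t : ℝ) : EReal) * u b ≤ u (t • a + (1 - t) • b)

noncomputable def qslope (u : ℝ × ℝ → EReal) (w : ℝ × ℝ) (t : ℝ) : ℝ :=
  ((u (t • w)).toReal - (u 0).toReal) / t

lemma smul_mem_ball {ε : ℝ} (hε : 0 < ε) (w : ℝ × ℝ) {t : ℝ}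
    (ht : |t| < ε / (‖w‖ + 1)) : t • w ∈ Metric.ball (0 : ℝ × ℝ) ε := by
  rw [mem_ball_zero_iff, norm_smul, Real.norm_eq_abs]
  have h1 : (0:ℝ) < ‖w‖ + 1 := by positivity
  nlinarith [abs_nonneg t, norm_nonneg w, (lt_div_iff₀ h1).mp ht]

lemma ureal {u : ℝ × ℝ → EReal} {ε : ℝ}
    (hfin : ∀ y ∈ Metric.ball ((0 : ℝ×ℝ)) ε, ∃ r : ℝ, u y = (r : EReal))
    {y : ℝ × ℝ} (hy : y ∈ Metric.ball ((0:ℝ×ℝ)) ε) : u y = (((u y).toReal : ℝ) : EReal) := by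
  obtain ⟨r, hr⟩ := hfin y hy
  rw [hr]; simp

lemma concR {u : ℝ × ℝ → EReal} {ε : ℝ} (hconc : ConcaveE u)
    (hfin : ∀ y ∈ Metric.ball ((0 : ℝ×ℝ)) ε, ∃ r : ℝ, u y = (r : EReal))
    {a b : ℝ × ℝ} (ha : a ∈ Metric.ball ((0:ℝ×ℝ)) ε) (hb : b ∈ Metric.ball ((0:ℝ×ℝ)) ε)
    {t : ℝ} (ht0 : 0 ≤ t) (ht1 : t ≤ 1) :
    t * (u a).toReal + (1 - t) * (u b).toReal ≤ (u (t • a + (1 - t) • b)).toReal := by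
  have hm : t • a + (1 - t) • b ∈ Metric.ball ((0:ℝ×ℝ)) ε :=
    convex_ball (0:ℝ×ℝ) ε ha hb ht0 (by linarith) (by ring)
  have key := hconc a b t ht0 ht1
  rw [ureal hfin ha, ureal hfin hb, ureal hfin hm] at key
  exact_mod_cast key

lemma qanti1 {u : ℝ × ℝ → EReal} {ε : ℝ} (hconc : ConcaveE u) (hε : 0 < ε)
    (hfin : ∀ y ∈ Metric.ball ((0 : ℝ×ℝ)) ε, ∃ r : ℝ, u y = (r : EReal))
    (w : ℝ × ℝ) {s t : ℝ} (hs : 0 < s) (hst : s ≤ t) (htb : t • w ∈ Metric.ball ((0:ℝ×ℝ)) ε) :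
    qslope u w t ≤ qslope u w s := by
  rcases eq_or_lt_of_le hst with rfl | hst
  · exact le_refl _
  have ht : 0 < t := hs.trans hst
  have htne : t ≠ 0 := ne_of_gt ht
  have hτ0 : 0 ≤ s / t := by positivity
  have hτ1 : s / t ≤ 1 := by rw [div_le_one ht]; exact hst.le
  have h0b : (0:ℝ×ℝ) ∈ Metric.ball ((0:ℝ×ℝ)) ε := Metric.mem_ball_self hε
  have key := concR hconc hfin htb h0b hτ0 hτ1
  rw [smul_zero, add_zero, smul_smul, div_mul_cancel₀ _ htne] at key
  set F := (u (t • w)).toReal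
  set Fs := (u (s • w)).toReal
  set F0 := (u 0).toReal
  have key2 : s * F + (t - s) * F0 ≤ t * Fs := by
    calc s * F + (t - s) * F0 = t * (s / t * F + (1 - s / t) * F0) := by field_simp
    _ ≤ t * Fs := mul_le_mul_of_nonneg_left key ht.le
  unfold qslope
  rw [div_le_div_iff₀ ht hs]
  linarith [key2]

lemma qcross {u : ℝ × ℝ → EReal} {ε : ℝ} (hconc : ConcaveE u) (hε : 0 < ε)
    (hfin : ∀ y ∈ Metric.ball ((0 : ℝ×ℝ)) ε, ∃ r : ℝ, u y = (r : EReal))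
    (w : ℝ × ℝ) {s t : ℝ} (hs : s < 0) (ht : 0 < t)
    (hsb : s • w ∈ Metric.ball ((0:ℝ×ℝ)) ε) (htb : t • w ∈ Metric.ball ((0:ℝ×ℝ)) ε) :
    qslope u w t ≤ qslope u w s := by
  have hts : 0 < t - s := by linarith
  set τ := -s / (t - s) with hτ
  have hτ0 : 0 ≤ τ := div_nonneg (by linarith) hts.le
  have hτ1 : τ ≤ 1 := by rw [hτ, div_le_one hts]; linarith
  have key := concR hconc hfin htb hsb hτ0 hτ1
  have hpt : τ • (t • w) + (1 - τ) • (s • w) = (0:ℝ×ℝ) := by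
    rw [smul_smul, smul_smul, ← add_smul]
    have : τ * t + (1 - τ) * s = 0 := by rw [hτ]; field_simp; ring
    rw [this, zero_smul]
  rw [hpt] at key
  set F := (u (t • w)).toReal
  set Fs := (u (s • w)).toReal
  set F0 := (u 0).toReal
  have key2 : (-s) * F + t * Fs ≤ (t - s) * F0 := by
    calc (-s) * F + t * Fs = (t - s) * (τ * F + (1 - τ) * Fs) := by
          rw [hτ]; field_simp; ring
    _ ≤ (t - s) * F0 := mul_le_mul_of_nonneg_left key hts.le
  unfold qslope
  rw [show (Fs - F0)/s = (F0 - Fs)/(-s) by ring, div_le_div_iff₀ ht (by linarith : (0:ℝ) < -s)]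
  linarith [key2]

lemma exists_d {u : ℝ × ℝ → EReal} {ε : ℝ} (hconc : ConcaveE u) (hε : 0 < ε)
    (hfin : ∀ y ∈ Metric.ball ((0 : ℝ×ℝ)) ε, ∃ r : ℝ, u y = (r : EReal))
    (w : ℝ × ℝ) :
    ∃ L : ℝ, Tendsto (qslope u w) (nhdsWithin 0 (Set.Ioi 0)) (nhds L) ∧
      ∀ t : ℝ, 0 < t → t < ε / (‖w‖ + 1) → qslope u w t ≤ L := by
  set δ := ε / (‖w‖ + 1) with hδdef
  have hδ : 0 < δ := by positivity
  have hmem : ∀ t : ℝ, t ∈ Set.Ioo (0:ℝ) δ → t • w ∈ Metric.ball ((0:ℝ×ℝ)) ε := by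
    intro t ht
    exact smul_mem_ball hε w (by rw [abs_of_pos ht.1]; exact ht.2)
  have hanti : AntitoneOn (qslope u w) (Set.Ioo (0:ℝ) δ) := by
    intro s hs t ht hst
    exact qanti1 hconc hε hfin w hs.1 hst (hmem t ht)
  have hmemneg : (-(δ/2)) • w ∈ Metric.ball ((0:ℝ×ℝ)) ε := by
    apply smul_mem_ball hε w
    rw [abs_of_neg (by linarith)]
    simpa using by linarith
  have hbdd : BddAbove (qslope u w '' Set.Ioo (0:ℝ) δ) := by
    refine ⟨qslope u w (-(δ/2)), ?_⟩
    rintro x ⟨t, ht, rfl⟩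
    exact qcross hconc hε hfin w (by linarith) ht.1 hmemneg (hmem t ht)
  have hne : (Set.Ioo (0:ℝ) δ).Nonempty := ⟨δ/2, by constructor <;> linarith⟩
  refine ⟨sSup (qslope u w '' Set.Ioo (0:ℝ) δ), ?_, ?_⟩
  · exact hanti.tendsto_nhdsWithin_Ioo_right hne hbdd
  · intro t ht htδ
    exact le_csSup hbdd ⟨t, ⟨ht, htδ⟩, rfl⟩

theorem interval_of_conditional_davis_prices
    (u : ℝ × ℝ → EReal)
    (hconc : ConcaveE u)
    (hntop : ∀ y, u y ≠ ⊤)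
    (ε : ℝ) (hε : 0 < ε)
    (hfin : ∀ y ∈ Metric.ball (((0 : ℝ), (0 : ℝ)) : ℝ × ℝ) ε, ∃ r : ℝ, u y = (r : EReal))
    (v : ℝ → ℝ) (hv : ∀ᶠ x in nhds (0 : ℝ), u (0, x) = ((v x : ℝ) : EReal))
    (yB : ℝ) (hyB : 0 < yB) (hderiv : HasDerivAt v yB 0) :
    ∃ Dp Dm : ℝ,
      Tendsto (fun e : ℝ => ((u (e, 0)).toReal - (u (0, 0)).toReal) / e)
        (nhdsWithin 0 (Set.Ioi 0)) (nhds Dp) ∧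
      Tendsto (fun e : ℝ => ((u (e, 0)).toReal - (u (0, 0)).toReal) / e)
        (nhdsWithin 0 (Set.Iio 0)) (nhds Dm) ∧
      Dp ≤ Dm ∧
      {p : ℝ | ∀ e : ℝ, u (e, -(e * p)) ≤ u (0, 0)} = Set.Icc (Dp / yB) (Dm / yB) := by
  have hfin' : ∀ y ∈ Metric.ball ((0 : ℝ×ℝ)) ε, ∃ r : ℝ, u y = (r : EReal) := hfin
  choose d hdT hdQ using fun w => exists_d hconc hε hfin' w
  have hv0 : u ((0:ℝ), (0:ℝ)) = ((v 0 : ℝ) : EReal) := hv.self_of_nhds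
  have hv0' : u ((0:ℝ×ℝ)) = ((v 0 : ℝ) : EReal) := hv0
  -- d 0 = 0
  have d0 : d 0 = 0 := by
    have hT0 : Tendsto (qslope u 0) (nhdsWithin 0 (Set.Ioi 0)) (nhds 0) := by
      have : qslope u 0 = fun _ : ℝ => (0:ℝ) := by
        funext t; simp [qslope]
      rw [this]; exact tendsto_const_nhds
    exact tendsto_nhds_unique (hdT 0) hT0
  -- vertical directional derivative
  have dvert : ∀ s : ℝ, d (s • ((0:ℝ),(1:ℝ))) = s * yB := by
    intro s
    rcases eq_or_ne s 0 with rfl | hs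
    · rw [zero_smul]; simpa using d0
    have hmap0 : Tendsto (fun t : ℝ => t * s) (nhdsWithin 0 (Set.Ioi 0)) (nhds (0:ℝ)) := by
      have : Tendsto (fun t : ℝ => t * s) (nhds 0) (nhds (0*s)) := tendsto_id.mul_const s
      rw [zero_mul] at this
      exact this.mono_left nhdsWithin_le_nhds
    have hmap : Tendsto (fun t : ℝ => t * s) (nhdsWithin 0 (Set.Ioi 0))
        (nhdsWithin 0 {(0:ℝ)}ᶜ) := by
      apply tendsto_nhdsWithin_of_tendsto_nhds_of_eventually_within _ hmap0
      filter_upwards [self_mem_nhdsWithin] with t ht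
      exact mul_ne_zero (ne_of_gt ht) hs
    have Tslope : Tendsto (fun t : ℝ => slope v 0 (t * s)) (nhdsWithin 0 (Set.Ioi 0))
        (nhds yB) := (hasDerivAt_iff_tendsto_slope.mp hderiv).comp hmap
    have T2 : Tendsto (fun t : ℝ => s * slope v 0 (t * s)) (nhdsWithin 0 (Set.Ioi 0))
        (nhds (s * yB)) := tendsto_const_nhds.mul Tslope
    have hpre : ∀ᶠ t in nhdsWithin (0:ℝ) (Set.Ioi 0), u (0, t*s) = ((v (t*s) : ℝ) : EReal) :=
      hmap0.eventually hv
    have hev : ∀ᶠ t in nhdsWithin (0:ℝ) (Set.Ioi 0),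
        qslope u (s • ((0:ℝ),(1:ℝ))) t = s * slope v 0 (t*s) := by
      filter_upwards [hpre, self_mem_nhdsWithin] with t hpt ht
      have ht0 : (0:ℝ) < t := ht
      have hpoint : t • (s • ((0:ℝ),(1:ℝ))) = ((0:ℝ), t*s) := by
        rw [smul_smul, Prod.smul_mk, smul_eq_mul, smul_eq_mul, mul_zero, mul_one]
      simp only [qslope, hpoint, hpt, hv0', EReal.toReal_coe]
      rw [slope_def_field]
      field_simp
      ring
    have : Tendsto (qslope u (s • ((0:ℝ),(1:ℝ)))) (nhdsWithin 0 (Set.Ioi 0))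
        (nhds (s * yB)) := Filter.Tendsto.congr' (Filter.EventuallyEq.symm hev) T2
    exact tendsto_nhds_unique (hdT _) this
  -- superadditivity
  have super : ∀ a b : ℝ × ℝ, d a + d b ≤ d (a + b) := by
    intro a b
    have h2t : Tendsto (fun t : ℝ => 2*t) (nhdsWithin 0 (Set.Ioi 0))
        (nhdsWithin 0 (Set.Ioi 0)) := by
      apply tendsto_nhdsWithin_of_tendsto_nhds_of_eventually_within
      · have : Tendsto (fun t : ℝ => 2*t) (nhds 0) (nhds (2*0)) :=
          (continuous_const.mul continuous_id).tendsto 0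
        rw [mul_zero] at this
        exact this.mono_left nhdsWithin_le_nhds
      · filter_upwards [self_mem_nhdsWithin] with t ht
        have ht0 : (0:ℝ) < t := ht
        exact Set.mem_Ioi.mpr (by linarith)
    have T1 : Tendsto (fun t => qslope u a (2*t) + qslope u b (2*t))
        (nhdsWithin 0 (Set.Ioi 0)) (nhds (d a + d b)) :=
      ((hdT a).comp h2t).add ((hdT b).comp h2t)
    set m := min (ε/(‖a‖+1)/2) (min (ε/(‖b‖+1)/2) (ε/(‖a+b‖+1))) with hm
    have hm0 : 0 < m := by positivity
    have hev : ∀ᶠ t in nhdsWithin (0:ℝ) (Set.Ioi 0),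
        qslope u a (2*t) + qslope u b (2*t) ≤ qslope u (a+b) t := by
      filter_upwards [Ioo_mem_nhdsGT hm0] with t ht
      obtain ⟨ht0, htm⟩ := ht
      have hba : (2*t) • a ∈ Metric.ball ((0:ℝ×ℝ)) ε := by
        apply smul_mem_ball hε
        rw [abs_of_pos (by linarith)]
        have := lt_of_lt_of_le htm (min_le_left _ _)
        linarith
      have hbb : (2*t) • b ∈ Metric.ball ((0:ℝ×ℝ)) ε := by
        apply smul_mem_ball hε
        rw [abs_of_pos (by linarith)]
        have := lt_of_lt_of_le htm ((min_le_right _ _).trans (min_le_left _ _))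
        linarith
      have key := concR hconc hfin' hba hbb (by norm_num : (0:ℝ) ≤ 1/2) (by norm_num : (1:ℝ)/2 ≤ 1)
      have hpoint : (1/2 : ℝ) • ((2*t) • a) + (1 - 1/2 : ℝ) • ((2*t) • b) = t • (a+b) := by
        rw [smul_smul, smul_smul, smul_add]
        have he : (1/2 : ℝ) * (2*t) = t := by ring
        have he2 : (1 - 1/2 : ℝ) * (2*t) = t := by ring
        rw [he, he2]
      rw [hpoint] at key
      simp only [qslope]
      have h2t0 : (0:ℝ) < 2*t := by linarith
      rw [← add_div, div_le_div_iff₀ h2t0 ht0]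
      nlinarith [key, ht0]
    exact le_of_tendsto_of_tendsto T1 (hdT (a+b)) hev
  -- shift along vertical direction
  have dshift : ∀ (w : ℝ × ℝ) (s : ℝ), d (w + s • ((0:ℝ),(1:ℝ))) = d w + s * yB := by
    intro w s
    have h1 := super w (s • ((0:ℝ),(1:ℝ)))
    have h2 := super (w + s • ((0:ℝ),(1:ℝ))) ((-s) • ((0:ℝ),(1:ℝ)))
    rw [dvert] at h1
    rw [dvert] at h2
    have hcan : (w + s • ((0:ℝ),(1:ℝ))) + (-s) • ((0:ℝ),(1:ℝ)) = w := by
      rw [neg_smul, add_neg_cancel_right]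
    rw [hcan] at h2
    linarith
  refine ⟨d ((1:ℝ),(0:ℝ)), -d ((-1:ℝ),(0:ℝ)), ?_, ?_, ?_, ?_⟩
  · have hqeq : (fun e : ℝ => ((u (e, 0)).toReal - (u (0, 0)).toReal) / e)
        = qslope u ((1:ℝ),(0:ℝ)) := by
      funext e
      simp only [qslope]
      congr 2
      rw [Prod.smul_mk, smul_eq_mul, smul_eq_mul, mul_one, mul_zero]
    rw [hqeq]
    exact hdT _
  · have hneg : Tendsto (fun e : ℝ => -e) (nhdsWithin 0 (Set.Iio 0))
        (nhdsWithin 0 (Set.Ioi 0)) := by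
      apply tendsto_nhdsWithin_of_tendsto_nhds_of_eventually_within
      · have : Tendsto (fun e : ℝ => -e) (nhds 0) (nhds (-0)) := continuous_neg.tendsto 0
        rw [neg_zero] at this
        exact this.mono_left nhdsWithin_le_nhds
      · filter_upwards [self_mem_nhdsWithin] with e he
        have : e < 0 := he
        exact Set.mem_Ioi.mpr (by linarith)
    have T := ((hdT ((-1:ℝ),(0:ℝ))).comp hneg).neg
    have hqeq : (fun e : ℝ => ((u (e, 0)).toReal - (u (0, 0)).toReal) / e)
        = fun e : ℝ => -(qslope u ((-1:ℝ),(0:ℝ)) (-e)) := by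
      funext e
      simp only [qslope]
      have hpoint : (-e) • ((-1:ℝ),(0:ℝ)) = ((e:ℝ), (0:ℝ)) := by
        rw [Prod.smul_mk, smul_eq_mul, smul_eq_mul, mul_zero, neg_mul_neg, mul_one]
      rw [hpoint]
      rw [show (u ((0:ℝ),(0:ℝ))).toReal = (u (0:ℝ×ℝ)).toReal from rfl]
      ring
    rw [hqeq]
    exact T
  · have h := super ((1:ℝ),(0:ℝ)) ((-1:ℝ),(0:ℝ))
    have heq : ((1:ℝ),(0:ℝ)) + ((-1:ℝ),(0:ℝ)) = (0:ℝ×ℝ) := by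
      rw [Prod.mk_add_mk]; norm_num
    rw [heq, d0] at h
    linarith
  · ext p
    simp only [Set.mem_setOf_eq, Set.mem_Icc]
    have hpt1 : ((1:ℝ),(0:ℝ)) + (-p) • ((0:ℝ),(1:ℝ)) = ((1:ℝ), -p) := by
      rw [Prod.smul_mk, smul_eq_mul, smul_eq_mul, mul_zero, mul_one, Prod.mk_add_mk]
      norm_num
    have hpt2 : ((-1:ℝ),(0:ℝ)) + p • ((0:ℝ),(1:ℝ)) = ((-1:ℝ), p) := by
      rw [Prod.smul_mk, smul_eq_mul, smul_eq_mul, mul_zero, mul_one, Prod.mk_add_mk]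
      norm_num
    have hd1eq : d ((1:ℝ), -p) = d ((1:ℝ),(0:ℝ)) + (-p) * yB := by
      rw [← hpt1, dshift]
    have hd2eq : d ((-1:ℝ), p) = d ((-1:ℝ),(0:ℝ)) + p * yB := by
      rw [← hpt2, dshift]
    constructor
    · intro hp
      have hd1 : d ((1:ℝ), -p) ≤ 0 := by
        apply le_of_tendsto (hdT ((1:ℝ),-p))
        have hδ : 0 < ε / (‖((1:ℝ),-p)‖ + 1) := by positivity
        filter_upwards [Ioo_mem_nhdsGT hδ] with t ht
        obtain ⟨ht0, htδ⟩ := ht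
        have hball : t • ((1:ℝ),-p) ∈ Metric.ball ((0:ℝ×ℝ)) ε :=
          smul_mem_ball hε _ (by rwa [abs_of_pos ht0])
        have hpoint : t • ((1:ℝ),-p) = ((t:ℝ), -(t*p)) := by
          rw [Prod.smul_mk, smul_eq_mul, smul_eq_mul, mul_one, mul_neg]
        have hle : u (t, -(t*p)) ≤ u ((0:ℝ),(0:ℝ)) := hp t
        have h0b : (0:ℝ×ℝ) ∈ Metric.ball ((0:ℝ×ℝ)) ε := Metric.mem_ball_self hε
        have e1 : u (t,-(t*p)) = (((u (t,-(t*p))).toReal : ℝ) : EReal) := by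
          rw [← hpoint]; exact ureal hfin' hball
        have e2 : u ((0:ℝ×ℝ)) = (((u ((0:ℝ×ℝ))).toReal : ℝ) : EReal) := ureal hfin' h0b
        have hle' : (u (t,-(t*p))).toReal ≤ (u ((0:ℝ×ℝ))).toReal := by
          have hle2 : u (t,-(t*p)) ≤ u ((0:ℝ×ℝ)) := hle
          rw [e1, e2] at hle2
          exact_mod_cast hle2
        show qslope u ((1:ℝ),-p) t ≤ 0
        simp only [qslope, hpoint]
        apply div_nonpos_of_nonpos_of_nonneg _ ht0.le
        have : (u ((t:ℝ),-(t*p))).toReal - (u ((0:ℝ×ℝ))).toReal ≤ 0 := sub_nonpos.mpr hle'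
        exact this
      have hd2 : d ((-1:ℝ), p) ≤ 0 := by
        apply le_of_tendsto (hdT ((-1:ℝ),p))
        have hδ : 0 < ε / (‖((-1:ℝ),p)‖ + 1) := by positivity
        filter_upwards [Ioo_mem_nhdsGT hδ] with t ht
        obtain ⟨ht0, htδ⟩ := ht
        have hball : t • ((-1:ℝ),p) ∈ Metric.ball ((0:ℝ×ℝ)) ε :=
          smul_mem_ball hε _ (by rwa [abs_of_pos ht0])
        have hpoint : t • ((-1:ℝ),p) = ((-t:ℝ), -((-t)*p)) := by
          rw [Prod.smul_mk, smul_eq_mul, smul_eq_mul, Prod.mk.injEq]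
          constructor <;> ring
        have hle : u (-t, -((-t)*p)) ≤ u ((0:ℝ),(0:ℝ)) := hp (-t)
        have h0b : (0:ℝ×ℝ) ∈ Metric.ball ((0:ℝ×ℝ)) ε := Metric.mem_ball_self hε
        have e1 : u ((-t:ℝ),-((-t)*p)) = (((u ((-t:ℝ),-((-t)*p))).toReal : ℝ) : EReal) := by
          rw [← hpoint]; exact ureal hfin' hball
        have e2 : u ((0:ℝ×ℝ)) = (((u ((0:ℝ×ℝ))).toReal : ℝ) : EReal) := ureal hfin' h0b
        have hle' : (u ((-t:ℝ),-((-t)*p))).toReal ≤ (u ((0:ℝ×ℝ))).toReal := by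
          have hle2 : u ((-t:ℝ),-((-t)*p)) ≤ u ((0:ℝ×ℝ)) := hle
          rw [e1, e2] at hle2
          exact_mod_cast hle2
        show qslope u ((-1:ℝ),p) t ≤ 0
        simp only [qslope, hpoint]
        apply div_nonpos_of_nonpos_of_nonneg _ ht0.le
        have : (u ((-t:ℝ),-((-t)*p))).toReal - (u ((0:ℝ×ℝ))).toReal ≤ 0 := sub_nonpos.mpr hle'
        exact this
      rw [hd1eq] at hd1
      rw [hd2eq] at hd2
      constructor
      · rw [div_le_iff₀ hyB]; linarith
      · rw [le_div_iff₀ hyB]; linarith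
    · rintro ⟨hp1, hp2⟩
      have hp1' : d ((1:ℝ),(0:ℝ)) ≤ p * yB := by
        rw [div_le_iff₀ hyB] at hp1; linarith
      have hp2' : p * yB ≤ -d ((-1:ℝ),(0:ℝ)) := by
        rw [le_div_iff₀ hyB] at hp2; linarith
      have hd1 : d ((1:ℝ), -p) ≤ 0 := by rw [hd1eq]; linarith
      have hd2 : d ((-1:ℝ), p) ≤ 0 := by rw [hd2eq]; linarith
      -- main maximality lemma
      have main : ∀ w : ℝ × ℝ, d w ≤ 0 → ∀ t : ℝ, 0 < t → u (t • w) ≤ u ((0:ℝ),(0:ℝ)) := by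
        intro w hw t ht
        have hδ : 0 < ε / (‖w‖ + 1) := by positivity
        have small : ∀ r : ℝ, 0 < r → r < ε / (‖w‖ + 1) → u (r • w) ≤ u ((0:ℝ),(0:ℝ)) := by
          intro r hr hrδ
          have hq := hdQ w r hr hrδ
          have hball : r • w ∈ Metric.ball ((0:ℝ×ℝ)) ε :=
            smul_mem_ball hε w (by rwa [abs_of_pos hr])
          have hle : (u (r • w)).toReal ≤ (u (0:ℝ×ℝ)).toReal := by
            have hq0 : qslope u w r ≤ 0 := le_trans hq hw
            by_contra hlt
            push_neg at hlt
            have : 0 < qslope u w r := div_pos (by linarith) hr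
            linarith
          have : u (r • w) ≤ u ((0:ℝ×ℝ)) := by
            rw [ureal hfin' hball, ureal hfin' (Metric.mem_ball_self hε)]
            exact_mod_cast hle
          exact this
        rcases lt_or_ge t (ε / (‖w‖ + 1)) with hcase | hcase
        · exact small t ht hcase
        · set r := ε / (‖w‖ + 1) / 2 with hrdef
          have hr : 0 < r := by positivity
          have hrδ : r < ε / (‖w‖ + 1) := by rw [hrdef]; linarith
          set τ := r / t with hτ
          have hτ0 : 0 ≤ τ := by positivity
          have hτ1 : τ ≤ 1 := by
            rw [hτ, div_le_one ht]; linarith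
          have key := hconc (t • w) 0 τ hτ0 hτ1
          have hpt2 : τ • (t • w) + (1 - τ) • (0:ℝ×ℝ) = r • w := by
            rw [smul_zero, add_zero, smul_smul, hτ, div_mul_cancel₀ _ (ne_of_gt ht)]
          rw [hpt2] at key
          have hsm : u (r • w) ≤ u ((0:ℝ×ℝ)) := small r hr hrδ
          have hchain : (τ : EReal) * u (t • w) + ((1 - τ : ℝ) : EReal) * u ((0:ℝ×ℝ))
              ≤ u ((0:ℝ×ℝ)) := le_trans key hsm
          rcases eq_or_ne (u (t • w)) ⊥ with hb | hb
          · rw [hb]; exact bot_le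
          · have hco : (((u (t • w)).toReal : ℝ) : EReal) = u (t • w) :=
              EReal.coe_toReal (hntop _) hb
            obtain ⟨r0, hr0⟩ := hfin' (0:ℝ×ℝ) (Metric.mem_ball_self hε)
            rw [← hco, hr0] at hchain
            have hτpos : 0 < τ := div_pos hr ht
            have hfinal : (u (t • w)).toReal ≤ r0 := by
              have hc2 : ((τ * (u (t • w)).toReal + (1 - τ) * r0 : ℝ) : EReal) ≤ ((r0 : ℝ) : EReal) := by
                push_cast
                exact hchain
              have hc3 : τ * (u (t • w)).toReal + (1 - τ) * r0 ≤ r0 := by exact_mod_cast hc2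
              nlinarith [hc3, hτpos]
            calc u (t • w) = (((u (t • w)).toReal : ℝ) : EReal) := hco.symm
              _ ≤ ((r0 : ℝ) : EReal) := by exact_mod_cast hfinal
              _ = u ((0:ℝ),(0:ℝ)) := hr0.symm
      intro e
      rcases lt_trichotomy e 0 with he | he | he
      · have hpoint : (-e) • ((-1:ℝ), p) = ((e:ℝ), -(e*p)) := by
          rw [Prod.smul_mk, smul_eq_mul, smul_eq_mul, Prod.mk.injEq]
          constructor <;> ring
        have := main ((-1:ℝ), p) hd2 (-e) (by linarith)
        rwa [hpoint] at this
      · subst he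
        norm_num
      · have hpoint : e • ((1:ℝ), -p) = ((e:ℝ), -(e*p)) := by
          rw [Prod.smul_mk, smul_eq_mul, smul_eq_mul, Prod.mk.injEq]
          constructor <;> ring
        have := main ((1:ℝ), -p) hd1 e he
        rwa [hpoint] at this
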